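/- If |ψ⟩ and |φ⟩ are unit vectors in ℂ^d ⊗ ℂ^d with equal reduced states on the second factor (tr_H |ψ⟩⟨ψ| = tr_H |φ⟩⟨φ|, where tr_H traces out the first factor), then there exists a unitary U on ℂ^d (acting on the first factor) with |φ⟩ = (U ⊗ id)|ψ⟩. -/

import Mathlib

open Matrix Kronecker BigOperators
open scoped ComplexOrder

noncomputable def traceNorm {n : Type*} [Fintype n] [DecidableEq n] (X : Matrix n n ℂ) : ℝ :=
  (((Matrix.posSemidef_conjTranspose_mul_self X).1.eigenvectorUnitary.1 *
    diagonal (((↑) : ℝ → ℂ) ∘ (Real.sqrt ·) ∘ (Matrix.posSemidef_conjTranspose_mul_self X).1.eigenvalues) *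
    (star (Matrix.posSemidef_conjTranspose_mul_self X).1.eigenvectorUnitary : Matrix n n ℂ)).trace).re

noncomputable def hsNorm {n : Type*} [Fintype n] (X : Matrix n n ℂ) : ℝ :=
  Real.sqrt ((Xᴴ * X).trace.re)

noncomputable def singularValues {n : Type*} [Fintype n] [DecidableEq n] (Y : Matrix n n ℂ) :
    n → ℝ :=
  fun i => Real.sqrt ((Matrix.posSemidef_conjTranspose_mul_self Y).1.eigenvalues i)

/-- Partial transpose on the first tensor factor. -/
def ptransp {d k : ℕ} (X : Matrix (Fin d × Fin k) (Fin d × Fin k) ℂ) :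
    Matrix (Fin d × Fin k) (Fin d × Fin k) ℂ :=
  fun p q => X (q.1, p.2) (p.1, q.2)

/-- Partial trace over the first tensor factor. -/
noncomputable def ptraceH {d k : ℕ} (X : Matrix (Fin d × Fin k) (Fin d × Fin k) ℂ) :
    Matrix (Fin k) (Fin k) ℂ :=
  fun j j' => ∑ i, X (i, j) (i, j')

def vec {d : ℕ} (A : Matrix (Fin d) (Fin d) ℂ) : Fin d × Fin d → ℂ := fun p => A p.1 p.2

/-- Outer product |v⟩⟨w|. -/
def outer {n : Type*} (v w : n → ℂ) : Matrix n n ℂ := fun i j => v i * star (w j)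

/-- The swap operator F(e_i ⊗ e_j) = e_j ⊗ e_i. -/
def swapOp (d : ℕ) : Matrix (Fin d × Fin d) (Fin d × Fin d) ℂ :=
  fun p q => if p.1 = q.2 ∧ p.2 = q.1 then 1 else 0

/-- Blockwise action of Φ ⊗ id on operators on H ⊗ K. -/
def tensorExt {d k : ℕ} (Φ : Matrix (Fin d) (Fin d) ℂ → Matrix (Fin d) (Fin d) ℂ)
    (Z : Matrix (Fin d × Fin k) (Fin d × Fin k) ℂ) :
    Matrix (Fin d × Fin k) (Fin d × Fin k) ℂ :=
  fun p q => Φ (fun a b => Z (a, p.2) (b, q.2)) p.1 q.1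

/-- Diamond norm (stabilized at ancilla dimension d). -/
noncomputable def diamondNorm {d : ℕ}
    (Φ : Matrix (Fin d) (Fin d) ℂ → Matrix (Fin d) (Fin d) ℂ) : ℝ :=
  ⨆ ρ : {ρ : Matrix (Fin d × Fin d) (Fin d × Fin d) ℂ // ρ.PosSemidef ∧ ρ.trace = 1},
    traceNorm (tensorExt Φ ρ.1)

local notation "⟪" x ", " y "⟫" => @inner ℂ _ _ x y

lemma piLp_equiv_toEuclideanLin_apply' {d : ℕ} (M : Matrix (Fin d) (Fin d) ℂ)
    (v : EuclideanSpace ℂ (Fin d)) :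
    WithLp.equiv 2 (Fin d → ℂ) (Matrix.toEuclideanLin M v) = M *ᵥ WithLp.equiv 2 (Fin d → ℂ) v :=
  rfl

lemma inner_toEuclideanLin {d : ℕ} (A : Matrix (Fin d) (Fin d) ℂ)
    (x y : EuclideanSpace ℂ (Fin d)) :
    ⟪Matrix.toEuclideanLin A x, Matrix.toEuclideanLin A y⟫
      = (star (WithLp.equiv 2 (Fin d → ℂ) x) ᵥ* (Aᴴ * A)) ⬝ᵥ (WithLp.equiv 2 (Fin d → ℂ) y) := by
  rw [EuclideanSpace.inner_eq_star_dotProduct]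
  simp only [Matrix.ofLp_toEuclideanLin_apply]
  rw [Matrix.star_mulVec, dotProduct_comm, Matrix.dotProduct_mulVec, Matrix.vecMul_vecMul]
  rfl

lemma key_unitary {d : ℕ} (M N : Matrix (Fin d) (Fin d) ℂ) (hMN : Mᴴ * M = Nᴴ * N) :
    ∃ U ∈ Matrix.unitaryGroup (Fin d) ℂ, N = U * M := by
  classical
  set V := EuclideanSpace ℂ (Fin d)
  let TM : V →ₗ[ℂ] V := Matrix.toEuclideanLin M
  let TN : V →ₗ[ℂ] V := Matrix.toEuclideanLin N
  have hinner : ∀ x y : V, ⟪TM x, TM y⟫ = ⟪TN x, TN y⟫ := by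
    intro x y
    rw [show TM x = Matrix.toEuclideanLin M x from rfl, show TN x = Matrix.toEuclideanLin N x from rfl,
      inner_toEuclideanLin, inner_toEuclideanLin, hMN]
  have hker : LinearMap.ker TM ≤ LinearMap.ker TN := by
    intro x hx
    simp only [LinearMap.mem_ker] at hx ⊢
    rw [← inner_self_eq_zero (𝕜 := ℂ), ← hinner, hx, inner_zero_left]
  let G : LinearMap.range TM →ₗ[ℂ] V :=
    ((LinearMap.ker TM).liftQ TN hker).comp (TM.quotKerEquivRange.symm : _ →ₗ[ℂ] _)
  have hG : ∀ x : V, G ⟨TM x, LinearMap.mem_range_self _ x⟩ = TN x := by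
    intro x
    have h1 : TM.quotKerEquivRange.symm ⟨TM x, LinearMap.mem_range_self _ x⟩
        = Submodule.Quotient.mk x := TM.quotKerEquivRange_symm_apply_image x _
    simp only [G, LinearMap.comp_apply, LinearEquiv.coe_coe, h1, Submodule.liftQ_apply,
      Submodule.mkQ_apply]
  have hGnorm : ∀ v : LinearMap.range TM, ‖G v‖ = ‖v‖ := by
    rintro ⟨v, x, rfl⟩
    rw [hG x]
    have h0 := hinner x x
    rw [inner_self_eq_norm_sq_to_K, inner_self_eq_norm_sq_to_K] at h0
    have h2 : ‖TM x‖ ^ 2 = ‖TN x‖ ^ 2 := by exact_mod_cast h0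
    have h3 : ‖(⟨TM x, LinearMap.mem_range_self _ x⟩ : LinearMap.range TM)‖ = ‖TM x‖ := rfl
    rw [h3]
    calc ‖TN x‖ = Real.sqrt (‖TN x‖ ^ 2) := (Real.sqrt_sq (norm_nonneg _)).symm
      _ = Real.sqrt (‖TM x‖ ^ 2) := by rw [h2]
      _ = ‖TM x‖ := Real.sqrt_sq (norm_nonneg _)
  let L : LinearMap.range TM →ₗᵢ[ℂ] V := ⟨G, hGnorm⟩
  let f : V →ₗᵢ[ℂ] V := L.extend
  have hf : ∀ x : V, f (TM x) = TN x := by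
    intro x
    have := L.extend_apply ⟨TM x, LinearMap.mem_range_self _ x⟩
    rw [this]
    exact hG x
  let U : Matrix (Fin d) (Fin d) ℂ := Matrix.toEuclideanLin.symm f.toLinearMap
  have hU : Matrix.toEuclideanLin U = f.toLinearMap := Matrix.toEuclideanLin.apply_symm_apply _
  have hUapp : ∀ x : V, Matrix.toEuclideanLin U x = f x := fun x => by rw [hU]; rfl
  refine ⟨U, ?_, ?_⟩
  · rw [Matrix.mem_unitaryGroup_iff']
    ext i j
    have h1 : (star U * U) i j = ⟪Matrix.toEuclideanLin U (EuclideanSpace.single i 1),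
        Matrix.toEuclideanLin U (EuclideanSpace.single j 1)⟫ := by
      rw [inner_toEuclideanLin]
      simp only [Matrix.star_eq_conjTranspose]
      have hsingle : ∀ k : Fin d, WithLp.equiv 2 (Fin d → ℂ) (EuclideanSpace.single k 1)
          = Pi.single k 1 := fun k => rfl
      rw [hsingle, hsingle]
      simp [Matrix.vecMul, dotProduct, Pi.single_apply, Finset.sum_ite_eq,
        Finset.sum_ite_eq']
    rw [h1, hUapp, hUapp, f.inner_map_map, EuclideanSpace.inner_single_left]
    simp [EuclideanSpace.single_apply, Matrix.one_apply, eq_comm]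
  · have hvec : ∀ x : Fin d → ℂ, (U * M) *ᵥ x = N *ᵥ x := by
      intro x
      have := hf ((WithLp.equiv 2 (Fin d → ℂ)).symm x)
      have h2 := congrArg (WithLp.equiv 2 (Fin d → ℂ)) this
      rw [← hUapp] at h2
      rw [show TM ((WithLp.equiv 2 (Fin d → ℂ)).symm x)
          = Matrix.toEuclideanLin M ((WithLp.equiv 2 (Fin d → ℂ)).symm x) from rfl] at h2
      rw [piLp_equiv_toEuclideanLin_apply', piLp_equiv_toEuclideanLin_apply',
        piLp_equiv_toEuclideanLin_apply'] at h2
      simp only [Equiv.apply_symm_apply] at h2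
      rw [← Matrix.mulVec_mulVec]
      exact h2
    ext i j
    have := congrFun (hvec (Pi.single j 1)) i
    simpa using this.symm
theorem uhlmann_unitary_freedom {d : ℕ} (ψ φ : Fin d × Fin d → ℂ)
    (hψ : ∑ p, ‖ψ p‖ ^ 2 = 1) (hφ : ∑ p, ‖φ p‖ ^ 2 = 1)
    (h : ptraceH (outer ψ ψ) = ptraceH (outer φ φ)) :
    ∃ U ∈ Matrix.unitaryGroup (Fin d) ℂ,
      φ = (U ⊗ₖ (1 : Matrix (Fin d) (Fin d) ℂ)).mulVec ψ := by
  classical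
  set M : Matrix (Fin d) (Fin d) ℂ := fun i j => ψ (i, j) with hM
  set N : Matrix (Fin d) (Fin d) ℂ := fun i j => φ (i, j) with hN
  have hMN : Mᴴ * M = Nᴴ * N := by
    ext j j'
    have hh := congrFun (congrFun h j') j
    simp only [ptraceH, outer] at hh
    simp only [Matrix.mul_apply, Matrix.conjTranspose_apply, hM, hN]
    calc ∑ i, star (ψ (i, j)) * ψ (i, j') = ∑ i, ψ (i, j') * star (ψ (i, j)) := by
          simp_rw [mul_comm]
      _ = ∑ i, φ (i, j') * star (φ (i, j)) := hh
      _ = ∑ i, star (φ (i, j)) * φ (i, j') := by simp_rw [mul_comm]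
  obtain ⟨U, hU, hNU⟩ := key_unitary M N hMN
  refine ⟨U, hU, ?_⟩
  funext p
  obtain ⟨i, j⟩ := p
  have : φ (i, j) = (U * M) i j := by rw [← hNU]
  rw [this, Matrix.mul_apply]
  simp only [Matrix.mulVec, dotProduct, Fintype.sum_prod_type,
    Matrix.kroneckerMap_apply, Matrix.one_apply]
  rw [Finset.sum_congr rfl]
  intro a _
  rw [Finset.sum_eq_single j]
  · simp [hM]
  · intro b _ hb; simp [Ne.symm hb]
  · intro hj; exact absurd (Finset.mem_univ j) hj
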